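/- For every φ̂ ∈ 𝓜(λ), the mapping 𝕋 ∋ w ↦ M_{φ̂_w} ∈ B(ℓ²(V)) is continuous in the strong operator topology. -/

import Mathlib

open Filter Finset Classical

set_option linter.unusedVariables false
open scoped ComplexConjugate ENNReal

noncomputable section
attribute [local instance] Classical.propDecidable

/-- A countably infinite rooted directed tree, encoded by the parent function
(with the convention `par root = root`) and the depth function `|·|`. -/
structure DirTree (V : Type*) where
  root : V
  par : V → V
  depth : V → ℕ
  par_root : par root = root
  depth_eq_zero : ∀ v, depth v = 0 ↔ v = root
  depth_par : ∀ v, v ≠ root → depth (par v) + 1 = depth v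

variable {V : Type*}

/-- The tree is leafless: every vertex has a child. -/
def DirTree.Leafless (T : DirTree V) : Prop :=
  ∀ u : V, ∃ v : V, v ≠ T.root ∧ T.par v = u

/-- `wProd T lam v k = λ_{par^k(v)|v}`, the product of the weights along `k` steps up from `v`. -/
def wProd (T : DirTree V) (lam : V → ℂ) (v : V) (k : ℕ) : ℂ :=
  ∏ n ∈ Finset.range k, lam (T.par^[n] v)

/-- `(Γ_φ f)(v) = ∑_{k=0}^{|v|} λ_{par^k(v)|v} φ(k) f(par^k(v))`. -/
def Gamma (T : DirTree V) (lam : V → ℂ) (φ : ℕ → ℂ) (f : V → ℂ) (v : V) : ℂ :=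
  ∑ k ∈ Finset.range (T.depth v + 1), wProd T lam v k * φ k * f (T.par^[k] v)

/-- `S` is the weighted shift `S_λ` on `ℓ²(V)`. -/
def IsShift (T : DirTree V) (lam : V → ℝ)
    (S : lp (fun _ : V => ℂ) 2 →L[ℂ] lp (fun _ : V => ℂ) 2) : Prop :=
  ∀ f : lp (fun _ : V => ℂ) 2, ∀ v : V,
    S f v = if v = T.root then 0 else (lam v : ℂ) * f (T.par v)

/-- `M` is the (bounded, everywhere defined) multiplication operator `M_φ` with symbol `φ`;
the existence of such an `M` is equivalent to `φ ∈ 𝓜(λ)`. -/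
def IsMultOp (T : DirTree V) (lam : V → ℝ) (φ : ℕ → ℂ)
    (M : lp (fun _ : V => ℂ) 2 →L[ℂ] lp (fun _ : V => ℂ) 2) : Prop :=
  ∀ f : lp (fun _ : V => ℂ) 2, ∀ v : V,
    M f v = Gamma T (fun u => (lam u : ℂ)) φ (⇑f) v

/-! ### Auxiliary material -/

open scoped Topology

section Aux

variable (T : DirTree V)

lemma DirTree.depth_iterate (v : V) :
    ∀ k, k ≤ T.depth v → T.depth (T.par^[k] v) + k = T.depth v := by
  intro k
  induction k with
  | zero => simp
  | succ k ih =>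
    intro hk
    have hk' : k ≤ T.depth v := Nat.le_of_succ_le hk
    have h1 := ih hk'
    have hne : T.par^[k] v ≠ T.root := by
      intro h
      rw [h] at h1
      have : T.depth T.root = 0 := (T.depth_eq_zero _).2 rfl
      omega
    have h2 := T.depth_par _ hne
    rw [Function.iterate_succ_apply']
    omega

lemma two_toReal_pos : (0:ℝ) < (2:ℝ≥0∞).toReal := by norm_num

lemma sq_summable (f : lp (fun _ : V => ℂ) 2) :
    Summable (fun v : V => ‖f v‖ ^ (2:ℕ)) := by
  have := (lp.memℓp f).summable two_toReal_pos
  refine this.congr fun v => ?_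
  have : ((2:ℝ≥0∞).toReal) = ((2:ℕ):ℝ) := by norm_num
  rw [this, Real.rpow_natCast]

/-- The diagonal operator `f ↦ (v ↦ w^{|v|} f v)` on `ℓ²(V)`, defined (as junk `0`)
for `‖w‖ > 1`. -/
def Dlp (w : ℂ) (f : lp (fun _ : V => ℂ) 2) : lp (fun _ : V => ℂ) 2 :=
  if hw : ‖w‖ ≤ 1 then
    ⟨fun v => w ^ T.depth v * f v, by
      apply memℓp_gen
      have hs := (lp.memℓp f).summable two_toReal_pos
      refine Summable.of_nonneg_of_le
        (fun v => Real.rpow_nonneg (norm_nonneg _) _) (fun v => ?_) hs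
      apply Real.rpow_le_rpow (norm_nonneg _) ?_ (le_of_lt two_toReal_pos)
      rw [norm_mul, norm_pow]
      calc ‖w‖ ^ T.depth v * ‖f v‖ ≤ 1 * ‖f v‖ := by
            gcongr
            exact pow_le_one₀ (norm_nonneg w) hw
        _ = ‖f v‖ := one_mul _⟩
  else 0

lemma Dlp_apply {w : ℂ} (hw : ‖w‖ ≤ 1) (f : lp (fun _ : V => ℂ) 2) (v : V) :
    (Dlp T w f : ∀ _ : V, ℂ) v = w ^ T.depth v * f v := by
  simp only [Dlp, dif_pos hw]

lemma Dlp_abs_le {w : ℂ} (hw : ‖w‖ ≤ 1) (f : lp (fun _ : V => ℂ) 2) (v : V) :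
    ‖(Dlp T w f : ∀ _ : V, ℂ) v‖ ≤ ‖f v‖ := by
  rw [Dlp_apply T hw, norm_mul, norm_pow]
  calc ‖w‖ ^ T.depth v * ‖f v‖ ≤ 1 * ‖f v‖ := by
        gcongr
        exact pow_le_one₀ (norm_nonneg w) hw
    _ = ‖f v‖ := one_mul _

lemma lp_norm_le (g h : lp (fun _ : V => ℂ) 2) (hle : ∀ v, ‖g v‖ ≤ ‖h v‖) :
    ‖g‖ ≤ ‖h‖ := by
  have hp := two_toReal_pos
  rw [← Real.rpow_le_rpow_iff (norm_nonneg _) (norm_nonneg _) hp,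
    lp.norm_rpow_eq_tsum hp, lp.norm_rpow_eq_tsum hp]
  refine Summable.tsum_le_tsum (fun v => ?_) ((lp.memℓp g).summable hp) ((lp.memℓp h).summable hp)
  exact Real.rpow_le_rpow (norm_nonneg _) (hle v) hp.le

lemma norm_Dlp_le {w : ℂ} (hw : ‖w‖ ≤ 1) (f : lp (fun _ : V => ℂ) 2) :
    ‖Dlp T w f‖ ≤ ‖f‖ :=
  lp_norm_le _ _ (fun v => Dlp_abs_le T hw f v)

lemma Dlp_sub {w : ℂ} (hw : ‖w‖ ≤ 1) (x y : lp (fun _ : V => ℂ) 2) :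
    Dlp T w x - Dlp T w y = Dlp T w (x - y) := by
  apply lp.ext
  funext v
  rw [lp.coeFn_sub, Pi.sub_apply, Dlp_apply T hw, Dlp_apply T hw, Dlp_apply T hw,
    lp.coeFn_sub, Pi.sub_apply, mul_sub]

/-- Continuity of `w ↦ Dlp T w f` on the closed unit disk, for fixed `f`. -/
lemma tendsto_Dlp (f : lp (fun _ : V => ℂ) 2) {w₀ : ℂ} (hw₀ : ‖w₀‖ ≤ 1) :
    Tendsto (fun w : ℂ => Dlp T w f) (𝓝[{w : ℂ | ‖w‖ ≤ 1}] w₀) (𝓝 (Dlp T w₀ f)) := by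
  rw [tendsto_iff_norm_sub_tendsto_zero]
  have hp := two_toReal_pos
  -- The squared norm tends to zero, by Tannery / dominated convergence.
  have key : Tendsto
      (fun w : ℂ => ∑' v : V, ‖(w ^ T.depth v - w₀ ^ T.depth v) * f v‖ ^ (2:ℕ))
      (𝓝[{w : ℂ | ‖w‖ ≤ 1}] w₀) (𝓝 0) := by
    have h0 : (0:ℝ) = ∑' v : V, (0:ℝ) := by simp
    rw [h0]
    apply tendsto_tsum_of_dominated_convergence
      (bound := fun v : V => 4 * ‖f v‖ ^ (2:ℕ))
    · exact (sq_summable f).mul_left 4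
    · intro v
      have hc : Continuous (fun w : ℂ => ‖(w ^ T.depth v - w₀ ^ T.depth v) * f v‖ ^ (2:ℕ)) := by
        fun_prop
      have := hc.tendsto w₀
      simp only [sub_self, zero_mul, norm_zero, zero_pow, ne_eq, OfNat.ofNat_ne_zero,
        not_false_eq_true] at this
      exact this.mono_left nhdsWithin_le_nhds
    · filter_upwards [eventually_mem_nhdsWithin] with w hw v
      have hw' : ‖w‖ ≤ 1 := hw
      rw [Real.norm_eq_abs, abs_of_nonneg (by positivity)]
      have hb : ‖(w ^ T.depth v - w₀ ^ T.depth v) * f v‖ ≤ 2 * ‖f v‖ := by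
        rw [norm_mul]
        gcongr
        calc ‖w ^ T.depth v - w₀ ^ T.depth v‖ ≤ ‖w ^ T.depth v‖ + ‖w₀ ^ T.depth v‖ :=
              norm_sub_le _ _
          _ ≤ 1 + 1 := by
              rw [norm_pow, norm_pow]
              gcongr <;> exact pow_le_one₀ (norm_nonneg _) ‹_›
          _ = 2 := by norm_num
      calc ‖(w ^ T.depth v - w₀ ^ T.depth v) * f v‖ ^ (2:ℕ) ≤ (2 * ‖f v‖) ^ (2:ℕ) := by
            gcongr
        _ = 4 * ‖f v‖ ^ (2:ℕ) := by ring
  -- now convert the squared norm statement to the norm statement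
  have hnorm : ∀ w : ℂ, ‖w‖ ≤ 1 →
      ‖Dlp T w f - Dlp T w₀ f‖ ^ ((2:ℝ≥0∞).toReal)
        = ∑' v : V, ‖(w ^ T.depth v - w₀ ^ T.depth v) * f v‖ ^ (2:ℕ) := by
    intro w hw
    rw [lp.norm_rpow_eq_tsum hp]
    congr 1
    funext v
    rw [lp.coeFn_sub, Pi.sub_apply, Dlp_apply T hw, Dlp_apply T hw₀, ← sub_mul]
    have h2 : ((2:ℝ≥0∞).toReal) = ((2:ℕ):ℝ) := by norm_num
    rw [h2, Real.rpow_natCast]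
  -- squeeze
  have hsq : Tendsto (fun w : ℂ => ‖Dlp T w f - Dlp T w₀ f‖ ^ ((2:ℝ≥0∞).toReal))
      (𝓝[{w : ℂ | ‖w‖ ≤ 1}] w₀) (𝓝 0) := by
    refine key.congr' ?_
    filter_upwards [eventually_mem_nhdsWithin] with w hw
    exact (hnorm w hw).symm
  have hcont : ContinuousAt (fun x : ℝ => x ^ (1 / (2:ℝ≥0∞).toReal : ℝ)) 0 := by
    apply Real.continuousAt_rpow_const
    right
    norm_num
  have := (hcont.tendsto).comp hsq
  have h0 : ((0:ℝ) ^ (1 / (2:ℝ≥0∞).toReal : ℝ)) = 0 := by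
    rw [Real.zero_rpow]
    norm_num
  rw [h0] at this
  refine this.congr fun w => ?_
  simp only [Function.comp_apply]
  rw [← Real.rpow_mul (norm_nonneg _), mul_one_div, div_self hp.ne', Real.rpow_one]

end Aux

/-- Lemma (iv): for `φ ∈ 𝓜(λ)`, the map `𝕋 ∋ w ↦ M_{φ_w}` is continuous
in the strong operator topology, i.e. `w ↦ M_{φ_w} f` is continuous on `𝕋` for every `f`. -/
theorem stmt1 [Countable V] [Infinite V] (T : DirTree V) (hTl : T.Leafless)
    (lam : V → ℝ) (hlam : ∀ v, v ≠ T.root → 0 < lam v)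
    (S : lp (fun _ : V => ℂ) 2 →L[ℂ] lp (fun _ : V => ℂ) 2) (hS : IsShift T lam S)
    (φ : ℕ → ℂ)
    (Mfam : ℂ → (lp (fun _ : V => ℂ) 2 →L[ℂ] lp (fun _ : V => ℂ) 2))
    (hMfam : ∀ w : ℂ, ‖w‖ = 1 → IsMultOp T lam (fun n => w ^ n * φ n) (Mfam w)) :
    ∀ f : lp (fun _ : V => ℂ) 2,
      ContinuousOn (fun w : ℂ => Mfam w f) {w : ℂ | ‖w‖ = 1} := by
  intro f
  -- Key identity: for `‖w‖ = 1`, `Mfam w f = Dlp w (Mfam 1 (Dlp (conj w) f))`.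
  have key : ∀ w : ℂ, ‖w‖ = 1 →
      Mfam w f = Dlp T w ((Mfam 1) (Dlp T (conj w) f)) := by
    intro w hw
    have hw1 : ‖w‖ ≤ 1 := hw.le
    have hwc : ‖(conj w : ℂ)‖ ≤ 1 := by rw [RCLike.norm_conj, hw]
    have hw0 : w ≠ 0 := by
      intro h; rw [h, norm_zero] at hw; norm_num at hw
    have hconj : (conj w : ℂ) = w⁻¹ := by
      apply eq_inv_of_mul_eq_one_left
      rw [mul_comm, Complex.mul_conj, Complex.normSq_eq_norm_sq, hw]
      norm_num
    apply lp.ext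
    funext v
    rw [hMfam w hw f v, Dlp_apply T hw1,
      hMfam 1 (by norm_num) (Dlp T (conj w) f) v]
    unfold Gamma
    rw [Finset.mul_sum]
    apply Finset.sum_congr rfl
    intro k hk
    rw [Finset.mem_range] at hk
    have hkd : k ≤ T.depth v := Nat.lt_succ_iff.mp hk
    have hdep := T.depth_iterate v k hkd
    rw [Dlp_apply T hwc]
    have hpow : w ^ T.depth v * (conj w) ^ T.depth (T.par^[k] v) = w ^ k := by
      rw [hconj, inv_pow]
      have : w ^ T.depth v = w ^ k * w ^ T.depth (T.par^[k] v) := by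
        rw [← pow_add]
        congr 1
        omega
      rw [this, mul_assoc, mul_inv_cancel₀ (pow_ne_zero _ hw0), mul_one]
    calc wProd T (fun u => (lam u : ℂ)) v k * (w ^ k * φ k) * f (T.par^[k] v)
        = (w ^ T.depth v * (conj w) ^ T.depth (T.par^[k] v)) *
            (wProd T (fun u => (lam u : ℂ)) v k * φ k * f (T.par^[k] v)) := by
          rw [hpow]; ring
      _ = w ^ T.depth v *
            (wProd T (fun u => (lam u : ℂ)) v k * (1 ^ k * φ k) *
              ((conj w) ^ T.depth (T.par^[k] v) * f (T.par^[k] v))) := by ring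
  -- Now prove continuity.
  intro w₀ hw₀
  have hw₀1 : ‖w₀‖ ≤ 1 := le_of_eq hw₀
  set g : ℂ → lp (fun _ : V => ℂ) 2 := fun w => (Mfam 1) (Dlp T (conj w) f) with hg
  -- continuity of `g` within the circle at `w₀`
  have hgcont : Tendsto g (𝓝[{w : ℂ | ‖w‖ = 1}] w₀) (𝓝 (g w₀)) := by
    apply ((Mfam 1).continuous.tendsto _).comp
    have hconj : Tendsto (fun w : ℂ => (conj w : ℂ))
        (𝓝[{w : ℂ | ‖w‖ = 1}] w₀) (𝓝[{w : ℂ | ‖w‖ ≤ 1}] (conj w₀)) := by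
      apply Filter.Tendsto.inf
      · exact (Complex.continuous_conj.tendsto w₀)
      · rw [Filter.tendsto_principal]
        filter_upwards [Filter.mem_principal_self _] with w hw
        show ‖(conj w : ℂ)‖ ≤ 1
        rw [RCLike.norm_conj]
        exact le_of_eq hw
    exact (tendsto_Dlp T f (by rw [RCLike.norm_conj]; exact hw₀1)).comp hconj
  -- the composed map tendsto
  show Tendsto (fun w : ℂ => Mfam w f) (𝓝[{w : ℂ | ‖w‖ = 1}] w₀) (𝓝 (Mfam w₀ f))
  have htarget : Mfam w₀ f = Dlp T w₀ (g w₀) := key w₀ hw₀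
  rw [htarget]
  have hD : Tendsto (fun w : ℂ => Dlp T w (g w)) (𝓝[{w : ℂ | ‖w‖ = 1}] w₀)
      (𝓝 (Dlp T w₀ (g w₀))) := by
    rw [tendsto_iff_norm_sub_tendsto_zero]
    have hb1 : Tendsto (fun w : ℂ => ‖g w - g w₀‖) (𝓝[{w : ℂ | ‖w‖ = 1}] w₀) (𝓝 0) := by
      rw [← tendsto_iff_norm_sub_tendsto_zero]
      exact hgcont
    have hb2 : Tendsto (fun w : ℂ => ‖Dlp T w (g w₀) - Dlp T w₀ (g w₀)‖)
        (𝓝[{w : ℂ | ‖w‖ = 1}] w₀) (𝓝 0) := by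
      rw [← tendsto_iff_norm_sub_tendsto_zero]
      have hsub : (𝓝[{w : ℂ | ‖w‖ = 1}] w₀) ≤ (𝓝[{w : ℂ | ‖w‖ ≤ 1}] w₀) := by
        apply nhdsWithin_mono
        intro w hw
        exact le_of_eq hw
      exact (tendsto_Dlp T (g w₀) hw₀1).mono_left hsub
    have hbound := hb1.add hb2
    rw [add_zero] at hbound
    apply squeeze_zero' (Filter.Eventually.of_forall (fun w => norm_nonneg _)) ?_ hbound
    filter_upwards [eventually_mem_nhdsWithin] with w hw
    have hw1 : ‖w‖ ≤ 1 := le_of_eq hw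
    calc ‖Dlp T w (g w) - Dlp T w₀ (g w₀)‖
        = ‖(Dlp T w (g w) - Dlp T w (g w₀)) + (Dlp T w (g w₀) - Dlp T w₀ (g w₀))‖ := by
          rw [sub_add_sub_cancel]
      _ ≤ ‖Dlp T w (g w) - Dlp T w (g w₀)‖ + ‖Dlp T w (g w₀) - Dlp T w₀ (g w₀)‖ :=
          norm_add_le _ _
      _ ≤ ‖g w - g w₀‖ + ‖Dlp T w (g w₀) - Dlp T w₀ (g w₀)‖ := by
          gcongr
          rw [Dlp_sub T hw1]
          exact norm_Dlp_le T hw1 _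
  refine hD.congr' ?_
  filter_upwards [eventually_mem_nhdsWithin] with w hw
  exact (key w hw).symm
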